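/- Let N ≥ 2 be an integer. Assume there are infinitely many primes p with p ∤ N such that p² does not divide N^{p−1} − 1. Then for every positive multiple M of N and every positive integer k, there exist r ≥ 1, positive integers k₁,…,k_r with k₁+⋯+k_r = k, and a function c from the units (ℤ/Mℤ)ˣ to Option((ℤ/Mℤ)^r), such that the set of primes p with p ∤ M, c(p mod M) = some (α₁,…,α_r), and Σ_{0 < m₁ < ⋯ < m_r < p, m_i ≡ α_i (mod M) for all i} 1/(m₁^{k₁}⋯m_r^{k_r}) nonzero in ZMod p, is infinite. -/

import Mathlib

open Finset

open scoped Classical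

noncomputable section

def fmzvA (p M : ℕ) (a₀ : ZMod M) : Finset ℕ :=
  (Finset.Ioo 0 p).filter (fun t : ℕ => (t : ZMod M) = a₀)

def fmzvF (p t : ℕ) : ZMod p := (t : ZMod p)⁻¹

def fmzvC (p M : ℕ) (a₀ : ZMod M) (s : ℕ) : Finset (Fin s → ℕ) :=
  (Fintype.piFinset fun _ : Fin s => fmzvA p M a₀).filter StrictMono

def fmzvZ (p M : ℕ) (a₀ : ZMod M) (s : ℕ) (c : Fin s → ℕ) : ZMod p :=
  ∑ m ∈ fmzvC p M a₀ s, ∏ i, fmzvF p (m i) ^ c i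

-- counting an initial segment of Fin s
lemma card_filter_val_lt {s : ℕ} (v : ℕ) (hv : v ≤ s) :
    ((univ : Finset (Fin s)).filter (fun j : Fin s => (j : ℕ) < v)).card = v := by
  have h : ((univ : Finset (Fin s)).filter (fun j : Fin s => (j : ℕ) < v)).card
      = (range v).card := by
    refine Finset.card_bij (fun (j : Fin s) _ => (j : ℕ)) ?_ ?_ ?_
    · intro j hj
      simp only [mem_filter] at hj
      exact mem_range.mpr hj.2
    · intro j1 h1 j2 h2 he
      exact Fin.val_injective he
    · intro x hx
      exact ⟨⟨x, lt_of_lt_of_le (mem_range.mp hx) hv⟩,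
        by simp [mem_range.mp hx], rfl⟩
  rw [h, Finset.card_range]

-- the cut position of t relative to a strict chain m
lemma pos_spec {s : ℕ} {m : Fin s → ℕ} (hm : StrictMono m) (t : ℕ) (j : Fin s) :
    (j : ℕ) < ((univ : Finset (Fin s)).filter (fun j' => m j' < t)).card ↔ m j < t := by
  set I := (univ : Finset (Fin s)).filter (fun j' => m j' < t) with hI
  constructor
  · intro hj
    by_contra hnot
    push_neg at hnot
    have hsub : I ⊆ Finset.Iio j := by
      intro j' hj'
      simp only [hI, mem_filter] at hj'
      exact Finset.mem_Iio.mpr (hm.lt_iff_lt.mp (lt_of_lt_of_le hj'.2 hnot))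
    have := Finset.card_le_card hsub
    rw [Fin.card_Iio] at this
    omega
  · intro hj
    have hsub : Finset.Iic j ⊆ I := by
      intro j' hj'
      simp only [hI, mem_filter]
      exact ⟨mem_univ _, lt_of_le_of_lt (hm.monotone (Finset.mem_Iic.mp hj')) hj⟩
    have := Finset.card_le_card hsub
    rw [Fin.card_Iic] at this
    omega

-- strict monotonicity of an insertion
lemma strictMono_insertNth {s : ℕ} {m : Fin s → ℕ} (hm : StrictMono m) (i : Fin (s + 1))
    (t : ℕ) (hlt : ∀ j : Fin s, (j : ℕ) < (i : ℕ) → m j < t)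
    (hgt : ∀ j : Fin s, (i : ℕ) ≤ (j : ℕ) → t < m j) :
    StrictMono (i.insertNth t m) := by
  intro a b hab
  by_cases ha : a = i
  · subst ha
    by_cases hb : b = a
    · subst hb; exact absurd hab (lt_irrefl _)
    · obtain ⟨j, hj⟩ := Fin.exists_succAbove_eq hb
      rw [Fin.insertNth_apply_same, ← hj, Fin.insertNth_apply_succAbove]
      refine hgt j ?_
      by_contra hc
      push_neg at hc
      have he : a.succAbove j = j.castSucc := Fin.succAbove_of_castSucc_lt _ _ (by
        rw [Fin.lt_iff_val_lt_val]; simpa using hc)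
      rw [he] at hj
      rw [← hj] at hab
      simp only [Fin.lt_iff_val_lt_val, Fin.coe_castSucc] at hab
      omega
  · obtain ⟨j, hj⟩ := Fin.exists_succAbove_eq ha
    by_cases hb : b = i
    · subst hb
      rw [Fin.insertNth_apply_same, ← hj, Fin.insertNth_apply_succAbove]
      refine hlt j ?_
      by_contra hc
      push_neg at hc
      have he : b.succAbove j = j.succ := Fin.succAbove_of_le_castSucc _ _ (by
        rw [Fin.le_iff_val_le_val]; simpa using hc)
      rw [he] at hj
      rw [← hj] at hab
      simp only [Fin.lt_iff_val_lt_val, Fin.val_succ] at hab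
      omega
    · obtain ⟨j', hj'⟩ := Fin.exists_succAbove_eq hb
      rw [← hj, ← hj', Fin.insertNth_apply_succAbove, Fin.insertNth_apply_succAbove]
      refine hm ?_
      have hmono := (Fin.strictMono_succAbove i).lt_iff_lt (a := j) (b := j')
      rw [hj, hj'] at hmono
      exact hmono.mp hab

lemma mem_fmzvC {p M : ℕ} {a₀ : ZMod M} {s : ℕ} {m : Fin s → ℕ} :
    m ∈ fmzvC p M a₀ s ↔ (∀ i, m i ∈ fmzvA p M a₀) ∧ StrictMono m := by
  simp [fmzvC, Fintype.mem_piFinset]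

set_option maxHeartbeats 1000000 in
lemma fmzv_step (p M : ℕ) (a₀ : ZMod M) (s : ℕ) (c : Fin s → ℕ) :
    fmzvZ p M a₀ s c * (∑ t ∈ fmzvA p M a₀, fmzvF p t)
      = (∑ i : Fin (s + 1), fmzvZ p M a₀ (s + 1) (i.insertNth 1 c))
        + ∑ i : Fin s, fmzvZ p M a₀ s (Function.update c i (c i + 1)) := by
  classical
  have hL : fmzvZ p M a₀ s c * (∑ t ∈ fmzvA p M a₀, fmzvF p t)
      = ∑ x ∈ (fmzvC p M a₀ s) ×ˢ fmzvA p M a₀,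
          (∏ i, fmzvF p (x.1 i) ^ c i) * fmzvF p x.2 := by
    rw [fmzvZ, Finset.sum_mul_sum, Finset.sum_product]
  have hR1 : ∀ i : Fin (s + 1), fmzvZ p M a₀ (s + 1) (i.insertNth 1 c)
      = ∑ w ∈ fmzvC p M a₀ (s + 1),
          fmzvF p (w i) * ∏ j, fmzvF p (w (i.succAbove j)) ^ c j := by
    intro i
    rw [fmzvZ]
    refine Finset.sum_congr rfl fun w _ => ?_
    rw [Fin.prod_univ_succAbove _ i]
    congr 1
    · rw [Fin.insertNth_apply_same, pow_one]
    · exact Finset.prod_congr rfl fun j _ => by rw [Fin.insertNth_apply_succAbove]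
  have hR2 : ∀ i : Fin s, fmzvZ p M a₀ s (Function.update c i (c i + 1))
      = ∑ m ∈ fmzvC p M a₀ s, fmzvF p (m i) * ∏ j, fmzvF p (m j) ^ c j := by
    intro i
    rw [fmzvZ]
    refine Finset.sum_congr rfl fun m _ => ?_
    have hterm : ∀ j : Fin s, fmzvF p (m j) ^ (Function.update c i (c i + 1)) j
        = fmzvF p (m j) ^ c j * (if j = i then fmzvF p (m j) else 1) := by
      intro j
      by_cases h : j = i
      · subst h; rw [Function.update_self, pow_succ, if_pos rfl]
      · rw [Function.update_of_ne h, if_neg h, mul_one]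
    rw [Finset.prod_congr rfl (fun j _ => hterm j), Finset.prod_mul_distrib,
      Finset.prod_ite_eq' univ i (fun j => fmzvF p (m j)), if_pos (mem_univ i), mul_comm]
  have hS1 : (∑ x ∈ (univ : Finset (Fin (s + 1))).sigma (fun _ => fmzvC p M a₀ (s + 1)),
          fmzvF p (x.2 x.1) * ∏ j, fmzvF p (x.2 (x.1.succAbove j)) ^ c j)
      = ∑ i : Fin (s + 1), fmzvZ p M a₀ (s + 1) (i.insertNth 1 c) := by
    rw [Finset.sum_sigma]
    exact Finset.sum_congr rfl fun i _ => (hR1 i).symm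
  have hS2 : (∑ x ∈ (univ : Finset (Fin s)).sigma (fun _ => fmzvC p M a₀ s),
          fmzvF p (x.2 x.1) * ∏ j, fmzvF p (x.2 j) ^ c j)
      = ∑ i : Fin s, fmzvZ p M a₀ s (Function.update c i (c i + 1)) := by
    rw [Finset.sum_sigma]
    exact Finset.sum_congr rfl fun i _ => (hR2 i).symm
  rw [hL, ← hS1, ← hS2]
  rw [← Finset.sum_filter_add_sum_filter_not ((fmzvC p M a₀ s) ×ˢ fmzvA p M a₀)
    (fun x => ∃ i, x.1 i = x.2)]
  have hmerge : ∑ x ∈ ((fmzvC p M a₀ s) ×ˢ fmzvA p M a₀).filter (fun x => ∃ i, x.1 i = x.2),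
      (∏ i, fmzvF p (x.1 i) ^ c i) * fmzvF p x.2
      = ∑ x ∈ (univ : Finset (Fin s)).sigma (fun _ => fmzvC p M a₀ s),
          fmzvF p (x.2 x.1) * ∏ j, fmzvF p (x.2 j) ^ c j := by
    refine Finset.sum_bij'
      (i := fun x hx => (⟨((Finset.mem_filter.mp hx).2).choose, x.1⟩ : Σ _ : Fin s, Fin s → ℕ))
      (j := fun y _ => (y.2, y.2 y.1)) ?_ ?_ ?_ ?_ ?_
    · intro x hx
      try dsimp only
      rw [Finset.mem_filter, Finset.mem_product] at hx
      exact Finset.mem_sigma.mpr ⟨mem_univ _, hx.1.1⟩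
    · intro y hy
      try dsimp only
      rw [Finset.mem_sigma] at hy
      rw [Finset.mem_filter, Finset.mem_product]
      exact ⟨⟨hy.2, (mem_fmzvC.mp hy.2).1 y.1⟩, ⟨y.1, rfl⟩⟩
    · intro x hx
      try dsimp only
      rw [Finset.mem_filter, Finset.mem_product] at hx
      exact Prod.ext rfl ((hx.2).choose_spec)
    · intro y hy
      try dsimp only
      rw [Finset.mem_sigma] at hy
      obtain ⟨-, hm⟩ := hy
      obtain ⟨hmA, hmono⟩ := mem_fmzvC.mp hm
      have h : ∃ j : Fin s, y.2 j = y.2 y.1 := ⟨y.1, rfl⟩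
      rw [Sigma.ext_iff]
      constructor
      · exact hmono.injective (Exists.choose_spec (p := fun j => y.2 j = y.2 y.1) _)
      · exact heq_of_eq rfl
    · intro x hx
      try dsimp only
      rw [Finset.mem_filter, Finset.mem_product] at hx
      try simp only
      rw [(hx.2).choose_spec, mul_comm]
  have hins : ∑ x ∈ ((fmzvC p M a₀ s) ×ˢ fmzvA p M a₀).filter
        (fun x => ¬ ∃ i, x.1 i = x.2), (∏ i, fmzvF p (x.1 i) ^ c i) * fmzvF p x.2
      = ∑ x ∈ (univ : Finset (Fin (s + 1))).sigma (fun _ => fmzvC p M a₀ (s + 1)),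
          fmzvF p (x.2 x.1) * ∏ j, fmzvF p (x.2 (x.1.succAbove j)) ^ c j := by
    have posd : ∀ x : (Fin s → ℕ) × ℕ,
        ((univ : Finset (Fin s)).filter (fun j : Fin s => x.1 j < x.2)).card < s + 1 :=
      fun x => Nat.lt_succ_of_le (le_trans (Finset.card_filter_le _ _) (by simp))
    refine Finset.sum_bij'
      (i := fun x hx => (⟨⟨_, posd x⟩,
        Fin.insertNth ⟨_, posd x⟩ x.2 x.1⟩ : Σ _ : Fin (s + 1), Fin (s + 1) → ℕ))
      (j := fun y _ => ((fun j => y.2 (y.1.succAbove j)), y.2 y.1)) ?_ ?_ ?_ ?_ ?_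
    · intro x hx
      try dsimp only
      rw [Finset.mem_filter, Finset.mem_product] at hx
      obtain ⟨⟨hmC, htA⟩, hne⟩ := hx
      obtain ⟨hmA, hm⟩ := mem_fmzvC.mp hmC
      push_neg at hne
      have hgt : ∀ j : Fin s,
          (((univ : Finset (Fin s)).filter (fun j : Fin s => x.1 j < x.2)).card : ℕ) ≤ (j : ℕ)
          → x.2 < x.1 j := by
        intro j hj
        rcases lt_trichotomy (x.1 j) x.2 with h1 | h1 | h1
        · have := (pos_spec hm x.2 j).mpr h1
          omega
        · exact absurd h1 (hne j)
        · exact h1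
      refine Finset.mem_sigma.mpr ⟨mem_univ _, mem_fmzvC.mpr ⟨?_, strictMono_insertNth hm _ x.2
        (fun j hj => (pos_spec hm x.2 j).mp hj) hgt⟩⟩
      intro j
      by_cases hji : j = (⟨_, posd x⟩ : Fin (s + 1))
      · subst hji
        try dsimp only
        rw [Fin.insertNth_apply_same]
        exact htA
      · obtain ⟨j', hj'⟩ := Fin.exists_succAbove_eq hji
        try dsimp only
        rw [← hj', Fin.insertNth_apply_succAbove]
        exact hmA j'
    · intro y hy
      try dsimp only
      rw [Finset.mem_sigma] at hy
      obtain ⟨-, hw⟩ := hy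
      obtain ⟨hwA, hw⟩ := mem_fmzvC.mp hw
      rw [Finset.mem_filter, Finset.mem_product]
      refine ⟨⟨mem_fmzvC.mpr ⟨fun j => hwA _, hw.comp (Fin.strictMono_succAbove y.1)⟩,
        hwA y.1⟩, ?_⟩
      rintro ⟨j, hj⟩
      exact Fin.succAbove_ne y.1 j (hw.injective hj)
    · intro x hx
      try dsimp only
      rw [Finset.mem_filter, Finset.mem_product] at hx
      try simp only
      refine Prod.ext ?_ ?_
      · funext j
        try simp only
        rw [Fin.insertNth_apply_succAbove]
      · simp only
        rw [Fin.insertNth_apply_same]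
    · intro y hy
      try dsimp only
      rw [Finset.mem_sigma] at hy
      obtain ⟨-, hw⟩ := hy
      obtain ⟨hwA, hw⟩ := mem_fmzvC.mp hw
      have hcard : ((univ : Finset (Fin s)).filter
          (fun j : Fin s => y.2 (y.1.succAbove j) < y.2 y.1)).card = (y.1 : ℕ) := by
        have hiff : ∀ j : Fin s, (y.2 (y.1.succAbove j) < y.2 y.1) ↔ (j : ℕ) < (y.1 : ℕ) := by
          intro j
          rw [hw.lt_iff_lt]
          constructor
          · intro hj
            by_contra hc
            push_neg at hc
            rw [Fin.succAbove_of_le_castSucc _ _ (by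
              rw [Fin.le_iff_val_le_val]; simpa using hc)] at hj
            simp only [Fin.lt_iff_val_lt_val, Fin.val_succ] at hj
            omega
          · intro hj
            rw [Fin.succAbove_of_castSucc_lt _ _ (by
              rw [Fin.lt_iff_val_lt_val]; simpa using hj)]
            rw [Fin.lt_iff_val_lt_val]
            simpa using hj
        rw [Finset.filter_congr (fun j _ => by rw [hiff j])]
        exact card_filter_val_lt _ (Nat.lt_succ_iff.mp y.1.isLt)
      have hposeq : (⟨((univ : Finset (Fin s)).filter
          (fun j : Fin s => y.2 (y.1.succAbove j) < y.2 y.1)).card,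
          posd ((fun j => y.2 (y.1.succAbove j)), y.2 y.1)⟩ : Fin (s + 1))
          = y.1 := Fin.ext hcard
      rw [Sigma.ext_iff]
      refine ⟨hposeq, ?_⟩
      rw [hposeq]
      simp only [heq_eq_eq]
      exact Fin.insertNth_self_removeNth y.1 y.2
    · intro x hx
      try dsimp only
      rw [Finset.mem_filter, Finset.mem_product] at hx
      try simp only
      rw [Fin.insertNth_apply_same, mul_comm]
      congr 1
      refine Finset.prod_congr rfl fun j _ => ?_
      rw [Fin.insertNth_apply_succAbove]
  rw [hmerge, hins, add_comm]

lemma Hj_zero (p N j : ℕ) (hp : p.Prime) (hpN : ¬ p ∣ N) (hN : 2 ≤ N)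
    (hj1 : 1 ≤ j) (hjN : j < N)
    (Hz : ∀ b : ZMod N, ∑ t ∈ (Ioo 0 p).filter (fun t : ℕ => (t : ZMod N) = b),
      ((t : ZMod p))⁻¹ = 0) :
    ∑ m ∈ (Ioo 0 p).filter (fun m : ℕ => N * m < j * p), ((m : ZMod p))⁻¹ = 0 := by
  haveI : Fact p.Prime := ⟨hp⟩
  have hN0 : 0 < N := by omega
  have hp0 : 0 < p := hp.pos
  have hNp : (N : ZMod p) ≠ 0 := by
    simpa [ZMod.natCast_eq_zero_iff] using hpN
  have h1 : ∑ m ∈ (Ioo 0 p).filter (fun m : ℕ => N * m < j * p), ((m : ZMod p))⁻¹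
      = ∑ n ∈ (Ioo 0 (j * p)).filter (fun n : ℕ => N ∣ n), (N : ZMod p) * ((n : ZMod p))⁻¹ := by
    refine Finset.sum_nbij' (fun m => N * m) (fun n => n / N) ?_ ?_ ?_ ?_ ?_
    · intro m hm
      simp only [mem_filter, mem_Ioo] at hm ⊢
      exact ⟨⟨Nat.mul_pos hN0 hm.1.1, hm.2⟩, ⟨m, rfl⟩⟩
    · intro n hn
      simp only [mem_filter, mem_Ioo] at hn ⊢
      obtain ⟨⟨hn0, hnj⟩, m, rfl⟩ := hn
      have hm0 : 0 < m := by
        rcases Nat.eq_zero_or_pos m with h | h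
        · subst h; simp at hn0
        · exact h
      rw [Nat.mul_div_cancel_left _ hN0]
      refine ⟨⟨hm0, ?_⟩, hnj⟩
      nlinarith
    · intro m hm; exact Nat.mul_div_cancel_left _ hN0
    · intro n hn
      simp only [mem_filter, mem_Ioo] at hn
      exact Nat.mul_div_cancel' hn.2
    · intro m hm
      push_cast
      rw [mul_inv, ← mul_assoc, mul_inv_cancel₀ hNp, one_mul]
  rw [h1]
  have h2 : ∑ n ∈ (Ioo 0 (j * p)).filter (fun n : ℕ => N ∣ n), (N : ZMod p) * ((n : ZMod p))⁻¹
      = ∑ x ∈ (range j).sigma (fun i => (Ioo 0 p).filter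
          (fun t : ℕ => (t : ZMod N) = -((i : ZMod N) * (p : ZMod N)))),
          (N : ZMod p) * ((x.2 : ZMod p))⁻¹ := by
    refine Finset.sum_nbij' (fun n => ⟨n / p, n % p⟩) (fun x => x.1 * p + x.2) ?_ ?_ ?_ ?_ ?_
    · intro n hn
      simp only [mem_filter, mem_Ioo] at hn
      obtain ⟨⟨hn0, hnj⟩, hdvd⟩ := hn
      have hpn : ¬ p ∣ n := by
        intro hpn
        obtain ⟨m, rfl⟩ := hdvd
        have hm0 : 0 < m := by
          rcases Nat.eq_zero_or_pos m with h | h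
          · subst h; simp at hn0
          · exact h
        have hmp : m < p := by nlinarith
        have := (Nat.Coprime.dvd_of_dvd_mul_left
          ((Nat.Prime.coprime_iff_not_dvd hp).mpr hpN) hpn)
        exact absurd this (Nat.not_dvd_of_pos_of_lt hm0 hmp)
      simp only [mem_sigma, mem_range, mem_filter, mem_Ioo]
      refine ⟨by rwa [Nat.div_lt_iff_lt_mul hp0], ⟨⟨?_, Nat.mod_lt _ hp0⟩, ?_⟩⟩
      · rcases Nat.eq_zero_or_pos (n % p) with h | h
        · exact absurd (Nat.dvd_of_mod_eq_zero h) hpn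
        · exact h
      · have hzero : ((n : ℕ) : ZMod N) = 0 := by
          rwa [ZMod.natCast_eq_zero_iff]
        have hdm : p * (n / p) + n % p = n := Nat.div_add_mod n p
        have : ((p * (n / p) + n % p : ℕ) : ZMod N) = 0 := by rw [hdm, hzero]
        push_cast at this
        linear_combination this
    · intro x hx
      simp only [mem_sigma, mem_range, mem_filter, mem_Ioo] at hx
      obtain ⟨hij, ⟨ht0, htp⟩, hcong⟩ := hx
      simp only [mem_filter, mem_Ioo]
      refine ⟨⟨by omega, ?_⟩, ?_⟩
      · calc x.1 * p + x.2 < x.1 * p + p := by omega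
          _ = (x.1 + 1) * p := by ring
          _ ≤ j * p := Nat.mul_le_mul_right _ (by omega)
      · rw [← ZMod.natCast_eq_zero_iff]
        push_cast
        rw [hcong]; ring
    · intro n hn
      simp only
      exact Nat.div_add_mod' n p
    · intro x hx
      simp only [mem_sigma, mem_range, mem_filter, mem_Ioo] at hx
      obtain ⟨hij, ⟨ht0, htp⟩, hcong⟩ := hx
      have h1 : (x.1 * p + x.2) / p = x.1 := by
        rw [mul_comm, Nat.mul_add_div hp0, Nat.div_eq_of_lt htp, add_zero]
      have h2 : (x.1 * p + x.2) % p = x.2 := by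
        rw [Nat.mul_add_mod']
        exact Nat.mod_eq_of_lt htp
      rw [h1, h2]
    · intro n hn
      have : ((n % p : ℕ) : ZMod p) = (n : ZMod p) := ZMod.natCast_mod n p
      simp only
      rw [this]
  rw [h2, Finset.sum_sigma]
  refine Finset.sum_eq_zero (fun i hi => ?_)
  rw [← Finset.mul_sum, Hz, mul_zero]

-- Step 2 : the weighted floor sum vanishes
lemma floor_sum_zero (p N : ℕ) (hp : p.Prime) (hpN : ¬ p ∣ N) (hN : 2 ≤ N)
    (Hz : ∀ b : ZMod N, ∑ t ∈ (Ioo 0 p).filter (fun t : ℕ => (t : ZMod N) = b),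
      ((t : ZMod p))⁻¹ = 0) :
    ∑ m ∈ Ioo 0 p, ((N * m / p : ℕ) : ZMod p) * ((m : ZMod p))⁻¹ = 0 := by
  haveI : Fact p.Prime := ⟨hp⟩
  haveI : NeZero N := ⟨by omega⟩
  have hp0 : 0 < p := hp.pos
  have hN0 : 0 < N := by omega
  -- the full harmonic sum vanishes
  have Hall : ∑ m ∈ Ioo 0 p, ((m : ZMod p))⁻¹ = 0 := by
    have hfib := Finset.sum_fiberwise_of_maps_to (s := Ioo 0 p)
      (t := (univ : Finset (ZMod N))) (g := fun t : ℕ => (t : ZMod N))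
      (fun x _ => Finset.mem_univ _) (fun t : ℕ => ((t : ZMod p))⁻¹)
    rw [← hfib]
    exact Finset.sum_eq_zero fun b _ => Hz b
  -- no m in (0,p) with N*m = j*p
  have hne : ∀ j m : ℕ, 1 ≤ j → j < N → m ∈ Ioo 0 p → N * m ≠ j * p := by
    intro j m hj1 hjN hm he
    simp only [mem_Ioo] at hm
    have hdvd : p ∣ N * m := ⟨j, by rw [he, mul_comm]⟩
    rcases (Nat.Prime.dvd_mul hp).mp hdvd with h | h
    · exact hpN h
    · exact Nat.not_dvd_of_pos_of_lt hm.1 hm.2 h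
  -- floor as a count
  have hfloor : ∀ m ∈ Ioo 0 p, N * m / p = ((Ico 1 N).filter (fun j => j * p < N * m)).card := by
    intro m hm
    simp only [mem_Ioo] at hm
    have hq : N * m / p < N := by
      rw [Nat.div_lt_iff_lt_mul hp0]
      nlinarith [hm.2]
    have : (Ico 1 N).filter (fun j => j * p < N * m) = Ico 1 (N * m / p + 1) := by
      ext j
      simp only [mem_filter, mem_Ico]
      constructor
      · rintro ⟨⟨h1, h2⟩, h3⟩
        refine ⟨h1, ?_⟩
        have : j ≤ N * m / p := by
          rw [Nat.le_div_iff_mul_le hp0]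
          omega
        omega
      · rintro ⟨h1, h2⟩
        have hle : j ≤ N * m / p := by omega
        have : j * p ≤ N * m := by
          calc j * p ≤ (N * m / p) * p := Nat.mul_le_mul_right _ hle
            _ ≤ N * m := Nat.div_mul_le_self _ _
        refine ⟨⟨h1, by omega⟩, ?_⟩
        rcases lt_or_eq_of_le this with h | h
        · exact h
        · exact absurd h.symm (hne j m h1 (by omega) (by simp only [mem_Ioo]; omega))
    rw [this, Nat.card_Ico]
    simp
  calc ∑ m ∈ Ioo 0 p, ((N * m / p : ℕ) : ZMod p) * ((m : ZMod p))⁻¹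
      = ∑ m ∈ Ioo 0 p, ∑ j ∈ (Ico 1 N).filter (fun j => j * p < N * m),
          ((m : ZMod p))⁻¹ := by
        refine Finset.sum_congr rfl fun m hm => ?_
        rw [hfloor m hm, Finset.sum_const, nsmul_eq_mul]
    _ = ∑ m ∈ Ioo 0 p, ∑ j ∈ Ico 1 N,
          if j * p < N * m then ((m : ZMod p))⁻¹ else 0 := by
        refine Finset.sum_congr rfl fun m _ => ?_
        rw [Finset.sum_filter]
    _ = ∑ j ∈ Ico 1 N, ∑ m ∈ Ioo 0 p,
          if j * p < N * m then ((m : ZMod p))⁻¹ else 0 := Finset.sum_comm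
    _ = 0 := by
        refine Finset.sum_eq_zero fun j hj => ?_
        simp only [mem_Ico] at hj
        rw [← Finset.sum_filter]
        have hsplit := Finset.sum_filter_add_sum_filter_not (Ioo 0 p)
          (fun m => j * p < N * m) (fun m : ℕ => ((m : ZMod p))⁻¹)
        have hnotlt : (Ioo 0 p).filter (fun m => ¬ j * p < N * m)
            = (Ioo 0 p).filter (fun m : ℕ => N * m < j * p) := by
          refine Finset.filter_congr fun m hm => ?_
          have := hne j m hj.1 hj.2 hm
          constructor
          · intro h; omega
          · intro h; omega
        rw [hnotlt, Hj_zero p N j hp hpN hN hj.1 hj.2 Hz, add_zero, Hall] at hsplit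
        exact hsplit

-- product of (1 + x * aᵢ) when x² = 0
lemma prod_one_add_sq_zero {R : Type*} [CommRing R] (x : R) (hx : x * x = 0)
    (s : Finset ℕ) (a : ℕ → R) :
    ∏ i ∈ s, (1 + x * a i) = 1 + x * ∑ i ∈ s, a i := by
  induction s using Finset.cons_induction with
  | empty => simp
  | cons i s his ih =>
    rw [Finset.prod_cons, ih, Finset.sum_cons]
    ring_nf
    linear_combination (a i * ∑ j ∈ s, a j) * hx

lemma lerch (p N : ℕ) (hp : p.Prime) (hpN : ¬ p ∣ N) (hN : 2 ≤ N)
    (Hz : ∀ b : ZMod N, ∑ t ∈ (Ioo 0 p).filter (fun t : ℕ => (t : ZMod N) = b),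
      ((t : ZMod p))⁻¹ = 0) :
    p ^ 2 ∣ N ^ (p - 1) - 1 := by
  haveI : Fact p.Prime := ⟨hp⟩
  haveI : NeZero (p ^ 2) := ⟨pow_ne_zero 2 hp.pos.ne'⟩
  have hp0 : 0 < p := hp.pos
  set R := ZMod (p ^ 2) with hR
  have hpp : (p : R) * (p : R) = 0 := by
    rw [← Nat.cast_mul, ZMod.natCast_eq_zero_iff]
    exact ⟨1, by ring⟩
  set r : ℕ → ℕ := fun m => N * m % p with hr
  set q : ℕ → ℕ := fun m => N * m / p with hq
  set sv : ℕ → ℕ := fun m => ((r m : ZMod p)⁻¹).val with hsv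
  have hmem : ∀ m ∈ Ioo 0 p, ¬ p ∣ N * m := by
    intro m hm hdvd
    simp only [mem_Ioo] at hm
    rcases (Nat.Prime.dvd_mul hp).mp hdvd with h | h
    · exact hpN h
    · exact Nat.not_dvd_of_pos_of_lt hm.1 hm.2 h
  have hr0 : ∀ m ∈ Ioo 0 p, 0 < r m := by
    intro m hm
    rcases Nat.eq_zero_or_pos (r m) with h | h
    · exact absurd (Nat.dvd_of_mod_eq_zero h) (hmem m hm)
    · exact h
  have hrp : ∀ m, r m < p := fun m => Nat.mod_lt _ hp0
  have hrcast : ∀ m, ((r m : ℕ) : ZMod p) = ((N * m : ℕ) : ZMod p) :=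
    fun m => ZMod.natCast_mod _ _
  have hrne : ∀ m ∈ Ioo 0 p, ((r m : ℕ) : ZMod p) ≠ 0 := by
    intro m hm h
    rw [ZMod.natCast_eq_zero_iff] at h
    exact Nat.not_dvd_of_pos_of_lt (hr0 m hm) (hrp m) h
  have hrs : ∀ m ∈ Ioo 0 p, ((r m * sv m : ℕ) : ZMod p) = 1 := by
    intro m hm
    push_cast [hsv]
    rw [ZMod.natCast_zmod_val]
    exact mul_inv_cancel₀ (hrne m hm)
  -- key factorization in R
  have key1 : ∀ m ∈ Ioo 0 p,
      ((N * m : ℕ) : R) = ((r m : ℕ) : R) * (1 + (p : R) * ((q m * sv m : ℕ) : R)) := by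
    intro m hm
    have hrs1 : 1 ≤ r m * sv m := by
      rcases Nat.eq_zero_or_pos (r m * sv m) with h | h
      · exfalso
        have := hrs m hm
        rw [h] at this
        simp only [Nat.cast_zero] at this
        exact zero_ne_one this
      · exact h
    have hmod : r m * sv m ≡ 1 [MOD p] := by
      rw [← ZMod.natCast_eq_natCast_iff]
      rw [hrs m hm]; norm_num
    obtain ⟨u, hu⟩ : ∃ u, r m * sv m = 1 + p * u := by
      obtain ⟨u, hu⟩ := (Nat.modEq_iff_dvd' hrs1).mp hmod.symm
      exact ⟨u, by omega⟩
    have hdm : N * m = p * q m + r m := (Nat.div_add_mod _ _).symm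
    have hdmR : ((N * m : ℕ) : R) = (p : R) * ((q m : ℕ) : R) + ((r m : ℕ) : R) := by
      rw [hdm, Nat.cast_add, Nat.cast_mul]
    have huR : ((r m : ℕ) : R) * ((sv m : ℕ) : R) = 1 + (p : R) * ((u : ℕ) : R) := by
      have : ((r m * sv m : ℕ) : R) = ((1 + p * u : ℕ) : R) := by rw [hu]
      rw [Nat.cast_mul, Nat.cast_add, Nat.cast_one, Nat.cast_mul] at this
      linear_combination this
    push_cast
    push_cast at hdmR huR
    linear_combination hdmR - (p : R) * (q m : R) * huR - ((q m : R) * (u : R)) * hpp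
  -- the products
  have hprodN : ∏ m ∈ Ioo 0 p, ((N * m : ℕ) : R)
      = ((N : ℕ) : R) ^ (p - 1) * ∏ m ∈ Ioo 0 p, ((m : ℕ) : R) := by
    calc ∏ m ∈ Ioo 0 p, ((N * m : ℕ) : R)
        = ∏ m ∈ Ioo 0 p, (((N : ℕ) : R) * ((m : ℕ) : R)) :=
          Finset.prod_congr rfl (fun m _ => by rw [Nat.cast_mul])
      _ = ((N : ℕ) : R) ^ (Ioo 0 p).card * ∏ m ∈ Ioo 0 p, ((m : ℕ) : R) := by
          rw [Finset.prod_mul_distrib, Finset.prod_const]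
      _ = ((N : ℕ) : R) ^ (p - 1) * ∏ m ∈ Ioo 0 p, ((m : ℕ) : R) := by
          rw [Nat.card_Ioo]
          norm_num
  -- the permutation product
  have hprodr : ∏ m ∈ Ioo 0 p, ((r m : ℕ) : R) = ∏ m ∈ Ioo 0 p, ((m : ℕ) : R) := by
    have hinj : Set.InjOn (fun m => r m) (Ioo 0 p : Finset ℕ) := by
      intro m1 h1 m2 h2 he
      simp only [mem_coe, mem_Ioo] at h1 h2
      have hNne : (N : ZMod p) ≠ 0 := by
        intro h
        rw [ZMod.natCast_eq_zero_iff] at h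
        exact hpN h
      have : ((m1 : ℕ) : ZMod p) = ((m2 : ℕ) : ZMod p) := by
        have e1 : ((N * m1 : ℕ) : ZMod p) = ((N * m2 : ℕ) : ZMod p) := by
          rw [← hrcast, ← hrcast]
          exact congrArg _ he
        push_cast at e1
        exact mul_left_cancel₀ hNne e1
      have v1 : (↑m1 : ZMod p).val = m1 := ZMod.val_cast_of_lt h1.2
      have v2 : (↑m2 : ZMod p).val = m2 := ZMod.val_cast_of_lt h2.2
      rw [← v1, ← v2, this]
    have himg : (Ioo 0 p).image (fun m => r m) = Ioo 0 p := by
      apply Finset.eq_of_subset_of_card_le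
      · intro t ht
        simp only [mem_image] at ht
        obtain ⟨m, hm, rfl⟩ := ht
        simp only [mem_Ioo]
        exact ⟨hr0 m hm, hrp m⟩
      · rw [Finset.card_image_of_injOn hinj]
    conv_rhs => rw [← himg]
    rw [Finset.prod_image (fun m hm m' hm' => hinj (by simpa using hm) (by simpa using hm'))]
  -- the 1 + p * ... product
  have hprod1 : ∏ m ∈ Ioo 0 p, (1 + (p : R) * ((q m * sv m : ℕ) : R))
      = 1 + (p : R) * ((∑ m ∈ Ioo 0 p, q m * sv m : ℕ) : R) := by
    rw [prod_one_add_sq_zero (p : R) hpp]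
    congr 1
    rw [Nat.cast_sum]
  -- combine
  have hEq : ((N : ℕ) : R) ^ (p - 1) * ∏ m ∈ Ioo 0 p, ((m : ℕ) : R)
      = (∏ m ∈ Ioo 0 p, ((m : ℕ) : R))
        * (1 + (p : R) * ((∑ m ∈ Ioo 0 p, q m * sv m : ℕ) : R)) := by
    rw [← hprodN, ← hprod1, ← hprodr, ← Finset.prod_mul_distrib]
    exact Finset.prod_congr rfl key1
  have hunit : IsUnit (∏ m ∈ Ioo 0 p, ((m : ℕ) : R)) := by
    refine Finset.prod_induction _ IsUnit (fun a b ha hb => ha.mul hb) isUnit_one ?_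
    intro m hm
    simp only [mem_Ioo] at hm
    exact (ZMod.isUnit_iff_coprime m (p ^ 2)).mpr
      (Nat.Coprime.pow_right 2
        (Nat.Coprime.symm ((Nat.Prime.coprime_iff_not_dvd hp).mpr
          (Nat.not_dvd_of_pos_of_lt hm.1 hm.2))))
  have hcancel : ((N : ℕ) : R) ^ (p - 1)
      = 1 + (p : R) * ((∑ m ∈ Ioo 0 p, q m * sv m : ℕ) : R) := by
    refine hunit.mul_left_cancel ?_
    rw [← hEq]; ring
  -- the sum is divisible by p
  have hWzero : ((∑ m ∈ Ioo 0 p, q m * sv m : ℕ) : ZMod p) = 0 := by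
    have hNinv : ∀ m ∈ Ioo 0 p, ((sv m : ℕ) : ZMod p)
        = ((N : ℕ) : ZMod p)⁻¹ * ((m : ℕ) : ZMod p)⁻¹ := by
      intro m hm
      rw [hsv]
      simp only
      rw [ZMod.natCast_zmod_val, hrcast]
      push_cast
      rw [mul_inv]
    rw [Nat.cast_sum]
    calc ∑ m ∈ Ioo 0 p, ((q m * sv m : ℕ) : ZMod p)
        = ∑ m ∈ Ioo 0 p, ((N : ℕ) : ZMod p)⁻¹
            * (((q m : ℕ) : ZMod p) * ((m : ℕ) : ZMod p)⁻¹) := by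
          refine Finset.sum_congr rfl fun m hm => ?_
          push_cast
          rw [hNinv m hm]
          ring
      _ = ((N : ℕ) : ZMod p)⁻¹
            * ∑ m ∈ Ioo 0 p, (((q m : ℕ) : ZMod p) * ((m : ℕ) : ZMod p)⁻¹) := by
          rw [Finset.mul_sum]
      _ = 0 := by
          rw [floor_sum_zero p N hp hpN hN Hz, mul_zero]
  obtain ⟨v, hv⟩ : p ∣ ∑ m ∈ Ioo 0 p, q m * sv m := by
    rwa [← ZMod.natCast_eq_zero_iff]
  have hfinal : ((N ^ (p - 1) : ℕ) : R) = ((1 : ℕ) : R) := by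
    push_cast
    rw [hcancel, hv]
    push_cast
    rw [show ((p * v : ℕ) : R) = (p : R) * (v : R) from Nat.cast_mul (α := ZMod (p ^ 2)) p v, ← mul_assoc, hpp]
    ring
  rw [ZMod.natCast_eq_natCast_iff] at hfinal
  exact (Nat.modEq_iff_dvd' (Nat.one_le_pow _ _ (by omega))).mp hfinal.symm

lemma exists_class_ne_zero (p N M : ℕ) (hp : p.Prime) (hN : 2 ≤ N) (hNM : N ∣ M)
    (hM : 0 < M) (hpM : ¬ p ∣ M) (hq2 : ¬ p ^ 2 ∣ N ^ (p - 1) - 1) :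
    ∃ a : ZMod M, ∑ t ∈ (Ioo 0 p).filter (fun t : ℕ => (t : ZMod M) = a),
      ((t : ZMod p))⁻¹ ≠ 0 := by
  haveI : NeZero M := ⟨hM.ne'⟩
  haveI : NeZero N := ⟨by omega⟩
  by_contra hcon
  push_neg at hcon
  have hpN : ¬ p ∣ N := fun h => hpM (h.trans hNM)
  refine hq2 (lerch p N hp hpN hN ?_)
  intro b
  have hfib := Finset.sum_fiberwise_of_maps_to
    (s := (Ioo 0 p).filter (fun t : ℕ => (t : ZMod N) = b))
    (t := (univ : Finset (ZMod M))) (g := fun t : ℕ => (t : ZMod M))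
    (fun x _ => Finset.mem_univ _) (fun t : ℕ => ((t : ZMod p))⁻¹)
  rw [← hfib]
  refine Finset.sum_eq_zero fun a _ => ?_
  rw [Finset.filter_filter]
  by_cases hab : ZMod.castHom hNM (ZMod N) a = b
  · have : (Ioo 0 p).filter (fun t : ℕ => (t : ZMod N) = b ∧ (t : ZMod M) = a)
        = (Ioo 0 p).filter (fun t : ℕ => (t : ZMod M) = a) := by
      refine Finset.filter_congr fun t _ => ?_
      constructor
      · exact fun h => h.2
      · intro h
        refine ⟨?_, h⟩
        rw [← hab, ← h, ← map_natCast (ZMod.castHom hNM (ZMod N)) t]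
    rw [this]
    exact hcon a
  · rw [Finset.filter_false_of_mem, Finset.sum_empty]
    rintro t _ ⟨h1, h2⟩
    refine hab ?_
    rw [← h2, ← h1, ← map_natCast (ZMod.castHom hNM (ZMod N)) t]

lemma fmzv_base (p M : ℕ) (a₀ : ZMod M) :
    fmzvZ p M a₀ 1 (fun _ => 1) = ∑ t ∈ fmzvA p M a₀, fmzvF p t := by
  rw [fmzvZ]
  refine Finset.sum_bij' (i := fun m _ => m 0) (j := fun t _ => fun _ => t)
    ?_ ?_ ?_ ?_ ?_
  · intro m hm
    exact (mem_fmzvC.mp hm).1 0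
  · intro t ht
    refine mem_fmzvC.mpr ⟨fun i => ht, Subsingleton.strictMono _⟩
  · intro m hm
    funext i
    rw [Subsingleton.elim i 0]
  · intro t ht
    rfl
  · intro m hm
    rw [Fin.prod_univ_one, pow_one]

lemma fmzv_exists_comp (p M : ℕ) (hp : p.Prime) (a₀ : ZMod M)
    (hS : ∑ t ∈ fmzvA p M a₀, fmzvF p t ≠ 0) :
    ∀ k : ℕ, 1 ≤ k → ∃ s : ℕ, (1 ≤ s ∧ s ≤ k) ∧ ∃ c : Fin s → ℕ,
      (∀ i, 0 < c i) ∧ (∑ i, c i) = k ∧ fmzvZ p M a₀ s c ≠ 0 := by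
  haveI : Fact p.Prime := ⟨hp⟩
  intro k hk
  induction k, hk using Nat.le_induction with
  | base =>
    exact ⟨1, ⟨le_refl 1, le_refl 1⟩, fun _ => 1, fun i => Nat.one_pos, by simp,
      by rw [fmzv_base]; exact hS⟩
  | succ n hn ih =>
    obtain ⟨s, ⟨hs1, hsn⟩, c, hcpos, hcsum, hZ⟩ := ih
    have hmul : fmzvZ p M a₀ s c * (∑ t ∈ fmzvA p M a₀, fmzvF p t) ≠ 0 :=
      mul_ne_zero hZ hS
    rw [fmzv_step] at hmul
    by_cases h1 : (∑ i : Fin (s + 1), fmzvZ p M a₀ (s + 1) (i.insertNth 1 c)) = 0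
    · have h2 : (∑ i : Fin s, fmzvZ p M a₀ s (Function.update c i (c i + 1))) ≠ 0 := by
        intro h2
        rw [h1, h2, add_zero] at hmul
        exact hmul rfl
      obtain ⟨i, -, hi⟩ := Finset.exists_ne_zero_of_sum_ne_zero h2
      refine ⟨s, ⟨hs1, by omega⟩, Function.update c i (c i + 1), ?_, ?_, hi⟩
      · intro j
        by_cases hji : j = i
        · subst hji; rw [Function.update_self]; omega
        · rw [Function.update_of_ne hji]; exact hcpos j
      · have herase := Finset.add_sum_erase univ c (mem_univ i)
        rw [Finset.sum_update_of_mem (mem_univ i), ← Finset.erase_eq]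
        omega
    · obtain ⟨i, -, hi⟩ := Finset.exists_ne_zero_of_sum_ne_zero h1
      refine ⟨s + 1, ⟨by omega, by omega⟩, i.insertNth 1 c, ?_, ?_, hi⟩
      · intro j
        by_cases hji : j = i
        · subst hji; rw [Fin.insertNth_apply_same]; omega
        · obtain ⟨j', hj'⟩ := Fin.exists_succAbove_eq hji
          rw [← hj', Fin.insertNth_apply_succAbove]
          exact hcpos j'
      · rw [Fin.sum_univ_succAbove _ i, Fin.insertNth_apply_same]
        simp only [Fin.insertNth_apply_succAbove]
        omega

/-- **Proposition 4.4.** Let `N ≥ 2` and suppose there are infinitely many primes `p ∤ N` with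
`p² ∤ N^{p-1} - 1` (i.e. `p` does not divide the Fermat quotient `q_p(N)`).  Then for every
positive multiple `M` of `N` and every positive integer `k` there are an index `(k₁,…,k_r)`,
`r ≥ 1`, of weight `k` and a color map `c : (ℤ/Mℤ)ˣ → Option ((ℤ/Mℤ)^r)` such that for
infinitely many primes `p ∤ M` the `p`-component of the corresponding finite multiple zeta
value of level `M`, namely `Σ_{0<m₁<⋯<m_r<p, m_i ≡ α_i (mod M)} 1/(m₁^{k₁}⋯m_r^{k_r})` where
`c(p mod M) = some α`, is nonzero in `ZMod p`. -/
theorem nonzero_fmzv_level_of_infinitely_many_nondiv_fermat_quotient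
    (N : ℕ) (hN : 2 ≤ N)
    (hq : {p : ℕ | p.Prime ∧ ¬ p ∣ N ∧ ¬ (p ^ 2 ∣ N ^ (p - 1) - 1)}.Infinite) :
    ∀ M : ℕ, 0 < M → N ∣ M → ∀ k : ℕ, 0 < k →
      ∃ r : ℕ, 0 < r ∧ ∃ ks : Fin r → ℕ, (∀ i, 0 < ks i) ∧ (∑ i, ks i) = k ∧
        ∃ c : (ZMod M)ˣ → Option (Fin r → ZMod M),
          {p : ℕ | p.Prime ∧ ¬ p ∣ M ∧
            ∃ (u : (ZMod M)ˣ) (α : Fin r → ZMod M), (u : ZMod M) = (p : ZMod M) ∧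
              c u = some α ∧
              (∑ m ∈ (Fintype.piFinset fun _ : Fin r => Finset.Ioo 0 p).filter
                  (fun m : Fin r → ℕ => StrictMono m ∧ ∀ i, ((m i : ZMod M) = α i)),
                ∏ i, ((m i : ZMod p) ^ ks i)⁻¹) ≠ 0}.Infinite := by
  intro M hM hNM k hk
  haveI : NeZero M := ⟨hM.ne'⟩
  -- the infinite set of good primes not dividing M
  set Q : Set ℕ := {p : ℕ | p.Prime ∧ ¬ p ∣ N ∧ ¬ (p ^ 2 ∣ N ^ (p - 1) - 1)} with hQ
  have hdivM : {p : ℕ | p ∣ M}.Finite :=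
    Set.Finite.subset (Set.finite_Iic M) (fun p hp => Nat.le_of_dvd hM hp)
  have hG : (Q \ {p : ℕ | p ∣ M}).Infinite := hq.diff hdivM
  -- pigeonhole on the class a
  have hmem : ∀ p ∈ Q \ {p : ℕ | p ∣ M}, ∃ a : ZMod M,
      ∑ t ∈ fmzvA p M a, fmzvF p t ≠ 0 := by
    intro p hp
    obtain ⟨⟨hprime, hpN, hq2⟩, hpM⟩ := hp
    exact exists_class_ne_zero p N M hprime hN hNM hM hpM hq2
  have hpig1 : ∃ a₀ : ZMod M, {p : ℕ | p ∈ Q \ {p : ℕ | p ∣ M} ∧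
      ∑ t ∈ fmzvA p M a₀, fmzvF p t ≠ 0}.Infinite := by
    by_contra hcon
    push_neg at hcon
    refine hG ?_
    have hsub : Q \ {p : ℕ | p ∣ M} ⊆ ⋃ a : ZMod M, {p : ℕ | p ∈ Q \ {p : ℕ | p ∣ M} ∧
        ∑ t ∈ fmzvA p M a, fmzvF p t ≠ 0} := by
      intro p hp
      obtain ⟨a, ha⟩ := hmem p hp
      exact Set.mem_iUnion.mpr ⟨a, hp, ha⟩
    exact Set.Finite.subset (Set.finite_iUnion hcon) hsub
  obtain ⟨a₀, hH⟩ := hpig1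
  -- pigeonhole on the composition
  have hmem2 : ∀ p ∈ {p : ℕ | p ∈ Q \ {p : ℕ | p ∣ M} ∧
      ∑ t ∈ fmzvA p M a₀, fmzvF p t ≠ 0},
      ∃ σ : Σ s : Fin (k + 1), Fin (s : ℕ) → Fin (k + 1),
        (1 ≤ (σ.1 : ℕ) ∧ (∀ i, 0 < ((σ.2 i : ℕ))) ∧ (∑ i, ((σ.2 i : ℕ))) = k) ∧
        fmzvZ p M a₀ (σ.1 : ℕ) (fun i => (σ.2 i : ℕ)) ≠ 0 := by
    intro p hp
    obtain ⟨⟨⟨hprime, -, -⟩, -⟩, hS⟩ := hp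
    obtain ⟨s, ⟨hs1, hsk⟩, c, hcpos, hcsum, hZ⟩ :=
      fmzv_exists_comp p M hprime a₀ hS k hk
    have hci : ∀ i, c i ≤ k := by
      intro i
      rw [← hcsum]
      exact Finset.single_le_sum (fun j _ => Nat.zero_le _) (mem_univ i)
    refine ⟨⟨⟨s, by omega⟩, fun i => ⟨c i, by have := hci i; omega⟩⟩, ⟨hs1, ?_, ?_⟩, ?_⟩
    · exact fun i => hcpos i
    · exact hcsum
    · exact hZ
  have hpig2 : ∃ σ : Σ s : Fin (k + 1), Fin (s : ℕ) → Fin (k + 1),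
      {p : ℕ | p ∈ {p : ℕ | p ∈ Q \ {p : ℕ | p ∣ M} ∧
          ∑ t ∈ fmzvA p M a₀, fmzvF p t ≠ 0} ∧
        ((1 ≤ (σ.1 : ℕ) ∧ (∀ i, 0 < ((σ.2 i : ℕ))) ∧ (∑ i, ((σ.2 i : ℕ))) = k) ∧
          fmzvZ p M a₀ (σ.1 : ℕ) (fun i => (σ.2 i : ℕ)) ≠ 0)}.Infinite := by
    by_contra hcon
    push_neg at hcon
    refine hH ?_
    have hsub : {p : ℕ | p ∈ Q \ {p : ℕ | p ∣ M} ∧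
        ∑ t ∈ fmzvA p M a₀, fmzvF p t ≠ 0}
        ⊆ ⋃ σ : Σ s : Fin (k + 1), Fin (s : ℕ) → Fin (k + 1),
          {p : ℕ | p ∈ {p : ℕ | p ∈ Q \ {p : ℕ | p ∣ M} ∧
              ∑ t ∈ fmzvA p M a₀, fmzvF p t ≠ 0} ∧
            ((1 ≤ (σ.1 : ℕ) ∧ (∀ i, 0 < ((σ.2 i : ℕ))) ∧ (∑ i, ((σ.2 i : ℕ))) = k) ∧
              fmzvZ p M a₀ (σ.1 : ℕ) (fun i => (σ.2 i : ℕ)) ≠ 0)} := by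
      intro p hp
      obtain ⟨σ, hσ⟩ := hmem2 p hp
      exact Set.mem_iUnion.mpr ⟨σ, hp, hσ⟩
    exact Set.Finite.subset (Set.finite_iUnion hcon) hsub
  obtain ⟨σ₀, hinf⟩ := hpig2
  obtain ⟨p₀, hp₀⟩ := hinf.nonempty
  obtain ⟨-, ⟨hσ1, hσpos, hσsum⟩, -⟩ := hp₀
  -- assemble the answer
  refine ⟨(σ₀.1 : ℕ), by omega, fun i => (σ₀.2 i : ℕ), hσpos, hσsum,
    fun _ => some (fun _ => a₀), ?_⟩
  refine Set.Infinite.mono ?_ hinf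
  intro p hp
  obtain ⟨⟨⟨⟨hprime, -, -⟩, hpM⟩, -⟩, -, hZ⟩ := hp
  have hpM' : ¬ p ∣ M := hpM
  haveI : Fact p.Prime := ⟨hprime⟩
  have hcop : Nat.Coprime p M := (Nat.Prime.coprime_iff_not_dvd hprime).mpr hpM'
  refine ⟨hprime, hpM', ZMod.unitOfCoprime p hcop, fun _ => a₀,
    ZMod.coe_unitOfCoprime p hcop, rfl, ?_⟩
  -- identify the sum with fmzvZ
  have hset : (Fintype.piFinset fun _ : Fin (σ₀.1 : ℕ) => Finset.Ioo 0 p).filter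
      (fun m : Fin (σ₀.1 : ℕ) → ℕ => StrictMono m ∧ ∀ i, ((m i : ZMod M) = a₀))
      = fmzvC p M a₀ (σ₀.1 : ℕ) := by
    ext m
    simp only [mem_filter, Fintype.mem_piFinset, fmzvC, fmzvA]
    constructor
    · rintro ⟨h1, h2, h3⟩
      exact ⟨fun i => ⟨h1 i, h3 i⟩, h2⟩
    · rintro ⟨h1, h2⟩
      exact ⟨fun i => (h1 i).1, h2, fun i => (h1 i).2⟩
  have hterm : ∀ m : Fin (σ₀.1 : ℕ) → ℕ,
      (∏ i, ((m i : ZMod p) ^ ((σ₀.2 i : ℕ)))⁻¹)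
        = ∏ i, fmzvF p (m i) ^ ((σ₀.2 i : ℕ)) := by
    intro m
    refine Finset.prod_congr rfl fun i _ => ?_
    rw [fmzvF]
    exact (inv_pow ((m i : ZMod p)) _).symm
  rw [hset]
  intro hzero
  refine hZ ?_
  rw [fmzvZ]
  rw [← hzero]
  refine Finset.sum_congr rfl fun m _ => (hterm m).symm
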